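/- Let {U_1, …, U_n} be a d-convex union representation of a simplicial complex Δ, and let H ⊆ ℝ^d be a closed or open halfspace. Then Δ collapses onto the nerve of the collection {U_1 ∩ H, …, U_n ∩ H}. -/

import Mathlib

open Set

/-- An abstract simplicial complex on ground set `V`: a collection of finite
subsets of `V` that is closed under inclusion. -/
def IsSimplicialComplex {V : Type*} (Δ : Set (Finset V)) : Prop :=
  ∀ σ ∈ Δ, ∀ τ : Finset V, τ ⊆ σ → τ ∈ Δ

/-- The nerve of a collection of sets `U i`: the faces are the finite sets `σ`
of indices such that `⋂ i ∈ σ, U i ≠ ∅`, where by convention the empty face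
belongs to the nerve iff some `U i` is nonempty. -/
def nerveOf {V E : Type*} (U : V → Set E) : Set (Finset V) :=
  {σ | (∃ i, (U i).Nonempty) ∧ ∃ x, ∀ i ∈ σ, x ∈ U i}

/-- A facet of `Δ` is an inclusion-maximal face. -/
def IsFacet {V : Type*} (Δ : Set (Finset V)) (σ : Finset V) : Prop :=
  σ ∈ Δ ∧ ∀ τ ∈ Δ, σ ⊆ τ → τ = σ

/-- A free face of `Δ`: a face that is not a facet and is contained in a
unique facet. -/
def IsFreeFace {V : Type*} (Δ : Set (Finset V)) (σ : Finset V) : Prop :=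
  σ ∈ Δ ∧ ¬ IsFacet Δ σ ∧ ∃! τ : Finset V, IsFacet Δ τ ∧ σ ⊆ τ

/-- An elementary collapse removes from `Δ` all faces containing a free face. -/
def ElemCollapse {V : Type*} (Δ Γ : Set (Finset V)) : Prop :=
  ∃ σ : Finset V, IsFreeFace Δ σ ∧ Γ = {τ ∈ Δ | ¬ σ ⊆ τ}

/-- `Δ` collapses onto `Γ` if a (finite) sequence of elementary collapses
leads from `Δ` to `Γ`. -/
def CollapsesTo {V : Type*} (Δ Γ : Set (Finset V)) : Prop :=
  Relation.ReflTransGen ElemCollapse Δ Γ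

/-- `Δ` is collapsible if it collapses onto the void complex. -/
def Collapsible {V : Type*} (Δ : Set (Finset V)) : Prop :=
  CollapsesTo Δ (∅ : Set (Finset V))

/-- Euclidean space `ℝ^d`. -/
abbrev Euc (d : ℕ) : Type := EuclideanSpace ℝ (Fin d)

/-- `U` is a `d`-convex union representation of `Δ`: the `U i` are convex open
sets in `ℝ^d`, their union is convex, and their nerve is `Δ`. -/
def IsCURep {V : Type*} {d : ℕ} (U : V → Set (Euc d)) (Δ : Set (Finset V)) : Prop :=
  (∀ i, Convex ℝ (U i)) ∧ (∀ i, IsOpen (U i)) ∧ Convex ℝ (⋃ i, U i) ∧ nerveOf U = Δ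

/-- `Δ` is `d`-convex union representable. -/
def IsCUR {V : Type*} (d : ℕ) (Δ : Set (Finset V)) : Prop :=
  ∃ U : V → Set (Euc d), IsCURep U Δ

/-- `Δ` is convex union representable: `d`-convex union representable for some `d`. -/
def ConvexUnionRepresentable {V : Type*} (Δ : Set (Finset V)) : Prop :=
  ∃ d : ℕ, IsCUR d Δ

/-- `Δ` is `d`-representable: the nerve of a family of convex sets in `ℝ^d`. -/
def IsRep {V : Type*} (d : ℕ) (Δ : Set (Finset V)) : Prop :=
  ∃ U : V → Set (Euc d), (∀ i, Convex ℝ (U i)) ∧ nerveOf U = Δ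

/-- `H` is a closed or open halfspace of `ℝ^d`. -/
def IsHalfspace {d : ℕ} (H : Set (Euc d)) : Prop :=
  ∃ (f : Euc d →ₗ[ℝ] ℝ) (c : ℝ), f ≠ 0 ∧ (H = {x | f x < c} ∨ H = {x | f x ≤ c})

namespace CURAux

open Metric

variable {d : ℕ}

noncomputable abbrev psi (x : EuclideanSpace ℝ (Fin d)) : ℝ := ‖x‖ * ‖x‖

def lexLT (f : EuclideanSpace ℝ (Fin d) →ₗ[ℝ] ℝ) (x y : EuclideanSpace ℝ (Fin d)) : Prop :=
  f x < f y ∨ (f x = f y ∧ psi x < psi y)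

def IsBot (f : EuclideanSpace ℝ (Fin d) →ₗ[ℝ] ℝ) (S : Set (EuclideanSpace ℝ (Fin d)))
    (x : EuclideanSpace ℝ (Fin d)) : Prop :=
  x ∈ S ∧ ∀ y ∈ S, ¬ lexLT f y x

lemma lexLT_irrefl (f : EuclideanSpace ℝ (Fin d) →ₗ[ℝ] ℝ) (x : EuclideanSpace ℝ (Fin d)) :
    ¬ lexLT f x x := by
  rintro (h | ⟨-, h⟩) <;> exact lt_irrefl _ h

lemma psi_combo (x y : EuclideanSpace ℝ (Fin d)) {a b : ℝ} (ha : 0 ≤ a) (hb : 0 ≤ b)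
    (hab : a + b = 1) : psi (a • x + b • y) ≤ a * psi x + b * psi y := by
  have hn : ‖a • x + b • y‖ ≤ a * ‖x‖ + b * ‖y‖ := by
    calc ‖a • x + b • y‖ ≤ ‖a • x‖ + ‖b • y‖ := norm_add_le _ _
      _ = a * ‖x‖ + b * ‖y‖ := by
          rw [norm_smul, norm_smul, Real.norm_eq_abs, Real.norm_eq_abs,
            abs_of_nonneg ha, abs_of_nonneg hb]
  have h0 : (0:ℝ) ≤ ‖a • x + b • y‖ := norm_nonneg _
  have h1 : ‖a • x + b • y‖ * ‖a • x + b • y‖ ≤ (a * ‖x‖ + b * ‖y‖) * (a * ‖x‖ + b * ‖y‖) :=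
    mul_self_le_mul_self h0 hn
  have h2 : 0 ≤ a * b * ((‖x‖ - ‖y‖) * (‖x‖ - ‖y‖)) :=
    mul_nonneg (mul_nonneg ha hb) (mul_self_nonneg _)
  unfold psi
  nlinarith [h1, h2]

lemma bot_exists (f : EuclideanSpace ℝ (Fin d) →ₗ[ℝ] ℝ) {S : Set (EuclideanSpace ℝ (Fin d))}
    (hS : IsCompact S) (hne : S.Nonempty) : ∃ x, IsBot f S x := by
  have hfc : Continuous f := f.continuous_of_finiteDimensional
  have hψc : Continuous (psi (d := d)) := continuous_norm.mul continuous_norm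
  obtain ⟨x₀, hx₀S, hx₀⟩ := hS.exists_isMinOn hne hfc.continuousOn
  have hFcl : IsClosed {y : EuclideanSpace ℝ (Fin d) | f y ≤ f x₀} :=
    isClosed_le hfc continuous_const
  have hFc : IsCompact (S ∩ {y | f y ≤ f x₀}) := hS.inter_right hFcl
  have hFne : (S ∩ {y | f y ≤ f x₀}).Nonempty := ⟨x₀, hx₀S, by simp⟩
  obtain ⟨x₁, hx₁F, hx₁⟩ := hFc.exists_isMinOn hFne hψc.continuousOn
  have hx₁f : f x₁ = f x₀ := le_antisymm hx₁F.2 (isMinOn_iff.mp hx₀ x₁ hx₁F.1)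
  refine ⟨x₁, hx₁F.1, ?_⟩
  rintro y hy (h | ⟨h1, h2⟩)
  · exact absurd (isMinOn_iff.mp hx₀ y hy) (by rw [← hx₁f]; linarith)
  · have hyF : y ∈ S ∩ {y | f y ≤ f x₀} := ⟨hy, le_of_eq (h1.trans hx₁f)⟩
    exact absurd (isMinOn_iff.mp hx₁ y hyF) (by linarith)

lemma bot_unique (f : EuclideanSpace ℝ (Fin d) →ₗ[ℝ] ℝ) {S : Set (EuclideanSpace ℝ (Fin d))}
    (hconv : Convex ℝ S) {x y : EuclideanSpace ℝ (Fin d)}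
    (hx : IsBot f S x) (hy : IsBot f S y) : x = y := by
  have h1 : ¬ lexLT f y x := hx.2 y hy.1
  have h2 : ¬ lexLT f x y := hy.2 x hx.1
  have hfe : f x = f y := by
    by_contra h
    rcases lt_or_gt_of_ne h with h' | h'
    · exact h2 (Or.inl h')
    · exact h1 (Or.inl h')
  have hψe : psi x = psi y := by
    by_contra h
    rcases lt_or_gt_of_ne h with h' | h'
    · exact h2 (Or.inr ⟨hfe, h'⟩)
    · exact h1 (Or.inr ⟨hfe.symm, h'⟩)
  by_contra hne
  have hz : (1/2 : ℝ) • x + (1/2 : ℝ) • y ∈ S :=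
    hconv hx.1 hy.1 (by norm_num) (by norm_num) (by norm_num)
  set z := (1/2 : ℝ) • x + (1/2 : ℝ) • y with hzdef
  have hfz : f z = f x := by
    simp only [hzdef, map_add, map_smul, smul_eq_mul]
    rw [← hfe]; ring
  have hzn : z = (1/2 : ℝ) • (x + y) := by rw [smul_add]
  have hψz : psi z < psi x := by
    have hpar := parallelogram_law_with_norm ℝ x y
    have hnz : ‖z‖ = (1/2 : ℝ) * ‖x + y‖ := by
      rw [hzn, norm_smul, Real.norm_eq_abs]; norm_num
    have hxy : 0 < ‖x - y‖ := by
      rw [norm_pos_iff, sub_ne_zero]; exact hne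
    have : psi z = (1/4 : ℝ) * (‖x + y‖ * ‖x + y‖) := by
      unfold psi; rw [hnz]; ring
    unfold psi at *
    nlinarith [hpar, hψe, hxy, mul_pos hxy hxy]
  exact hx.2 z hz (Or.inr ⟨hfz, hψz⟩)

lemma bot_tail (f : EuclideanSpace ℝ (Fin d) →ₗ[ℝ] ℝ) {S : Set (EuclideanSpace ℝ (Fin d))}
    (hconv : Convex ℝ S) {x p : EuclideanSpace ℝ (Fin d)}
    (hx : x ∈ S) (hp : p ∈ S) (hlt : lexLT f x p) {ε : ℝ} (hε : 0 < ε) :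
    ∃ z ∈ S, dist z p < ε ∧ lexLT f z p := by
  have hxp : x ≠ p := by
    rintro rfl; exact lexLT_irrefl f x hlt
  have hD : 0 < dist x p := dist_pos.mpr hxp
  set s : ℝ := min 1 (ε / (2 * dist x p)) with hsdef
  have hs0 : 0 < s := lt_min one_pos (div_pos hε (by linarith))
  have hs1 : s ≤ 1 := min_le_left _ _
  set z := s • x + (1 - s) • p with hzdef
  have hzS : z ∈ S := hconv hx hp hs0.le (by linarith) (by ring)
  have hzp : z - p = s • (x - p) := by
    rw [hzdef]; module
  have hdzp : dist z p = s * dist x p := by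
    rw [dist_eq_norm, hzp, norm_smul, Real.norm_eq_abs, abs_of_pos hs0, dist_eq_norm]
  have hdist : dist z p < ε := by
    rw [hdzp]
    calc s * dist x p ≤ (ε / (2 * dist x p)) * dist x p :=
          mul_le_mul_of_nonneg_right (min_le_right _ _) hD.le
      _ = ε / 2 := by field_simp
      _ < ε := by linarith
  have hfz : f z = s * f x + (1 - s) * f p := by
    simp only [hzdef, map_add, map_smul, smul_eq_mul]
  refine ⟨z, hzS, hdist, ?_⟩
  rcases hlt with h | ⟨h1, h2⟩
  · exact Or.inl (by rw [hfz]; nlinarith)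
  · refine Or.inr ⟨by rw [hfz, h1]; ring, ?_⟩
    have hψ : psi z ≤ s * psi x + (1 - s) * psi p := psi_combo x p hs0.le (by linarith) (by ring)
    nlinarith

lemma nerve_mono {V E : Type*} {U W : V → Set E} (h : ∀ i, U i ⊆ W i) :
    nerveOf U ⊆ nerveOf W := by
  rintro σ ⟨⟨i, x, hx⟩, y, hy⟩
  exact ⟨⟨i, x, h i hx⟩, y, fun j hj => h j (hy j hj)⟩

lemma nerve_down {V E : Type*} {U : V → Set E} {σ τ : Finset V}
    (hσ : σ ∈ nerveOf U) (hτ : τ ⊆ σ) : τ ∈ nerveOf U := by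
  obtain ⟨h1, x, hx⟩ := hσ
  exact ⟨h1, x, fun i hi => hx i (hτ hi)⟩

end CURAux

namespace CURAux

open Metric Finset

theorem engine {n d : ℕ} (K : Fin n → Set (Euc d))
    (hKc : ∀ i, IsCompact (K i)) (hKv : ∀ i, Convex ℝ (K i))
    {C : Set (Euc d)} (hCU : C = ⋃ i, K i) (hCconv : Convex ℝ C)
    {r' : ℝ} (hr' : 0 < r')
    (hfull : ∀ p ∈ C, ∃ v, C ∩ ball p r' ⊆ K v)
    (f : Euc d →ₗ[ℝ] ℝ) (c : ℝ) :
    CollapsesTo (nerveOf K) (nerveOf fun i => K i ∩ {x | f x < c}) := by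
  classical
  set Hs : Set (Euc d) := {x | f x < c} with hHs
  set Δ' : Set (Finset (Fin n)) := nerveOf K with hΔ'
  set Γ' : Set (Finset (Fin n)) := nerveOf (fun i => K i ∩ Hs) with hΓ'
  by_cases hCne : C.Nonempty
  swap
  · have hCe : C = ∅ := Set.not_nonempty_iff_eq_empty.mp hCne
    have hKe : ∀ i, K i = ∅ := by
      intro i
      have : K i ⊆ C := hCU ▸ Set.subset_iUnion K i
      exact Set.eq_empty_of_subset_empty (hCe ▸ this)
    have h1 : Δ' = ∅ := by
      ext σ; simp only [hΔ', nerveOf, Set.mem_setOf_eq, Set.mem_empty_iff_false, iff_false]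
      rintro ⟨⟨i, hi⟩, -⟩
      rw [hKe i] at hi; exact Set.not_nonempty_empty hi
    have h2 : Γ' = ∅ := by
      ext σ; simp only [hΓ', nerveOf, Set.mem_setOf_eq, Set.mem_empty_iff_false, iff_false]
      rintro ⟨⟨i, hi⟩, -⟩
      rw [hKe i] at hi
      exact Set.not_nonempty_empty (hi.mono (Set.empty_inter Hs).subset)
    rw [h1, h2]
    exact Relation.ReflTransGen.refl
  -- main case
  have hCc : IsCompact C := hCU ▸ isCompact_iUnion hKc
  set Kσ : Finset (Fin n) → Set (Euc d) := fun γ => C ∩ ⋂ i ∈ γ, K i with hKσdef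
  have hKσc : ∀ γ, IsCompact (Kσ γ) :=
    fun γ => hCc.inter_right (isClosed_biInter fun i _ => (hKc i).isClosed)
  have hKσv : ∀ γ, Convex ℝ (Kσ γ) :=
    fun γ => hCconv.inter (convex_iInter fun i => convex_iInter fun _ => hKv i)
  have hKσC : ∀ γ, Kσ γ ⊆ C := fun γ => Set.inter_subset_left
  have hKσmono : ∀ {γ δ : Finset (Fin n)}, γ ⊆ δ → Kσ δ ⊆ Kσ γ := by
    intro γ δ h x hx
    exact ⟨hx.1, Set.mem_biInter fun i hi => Set.mem_iInter₂.mp hx.2 i (h hi)⟩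
  have hKσins : ∀ (γ : Finset (Fin n)) (v : Fin n), Kσ (insert v γ) = Kσ γ ∩ K v := by
    intro γ v
    ext x
    simp only [hKσdef, Set.mem_inter_iff, Set.mem_iInter, Finset.mem_insert]
    constructor
    · rintro ⟨hC, h⟩
      exact ⟨⟨hC, fun i hi => h i (Or.inr hi)⟩, h v (Or.inl rfl)⟩
    · rintro ⟨⟨hC, h⟩, hv⟩
      refine ⟨hC, fun i hi => ?_⟩
      rcases hi with rfl | hi
      · exact hv
      · exact h i hi
  have hKσerase : ∀ (γ : Finset (Fin n)) (v : Fin n), v ∈ γ →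
      Kσ (γ.erase v) ∩ K v = Kσ γ := by
    intro γ v hv
    rw [← hKσins, Finset.insert_erase hv]
  have hmemΔ : ∀ γ, γ ∈ Δ' ↔ (Kσ γ).Nonempty := by
    intro γ
    constructor
    · rintro ⟨⟨i, hi⟩, x, hx⟩
      rcases γ.eq_empty_or_nonempty with rfl | ⟨j, hj⟩
      · exact ⟨hCne.choose, hCne.choose_spec, by simp⟩
      · refine ⟨x, ?_, Set.mem_biInter hx⟩
        rw [hCU]; exact Set.mem_iUnion.mpr ⟨j, hx j hj⟩
    · rintro ⟨x, hxC, hx⟩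
      obtain ⟨y, hy⟩ := hCne
      rw [hCU] at hy
      obtain ⟨i, hi⟩ := Set.mem_iUnion.mp hy
      exact ⟨⟨i, y, hi⟩, x, fun j hj => Set.mem_iInter₂.mp hx j hj⟩
  have hmemΓ : ∀ γ, γ ∈ Γ' ↔ (Kσ γ ∩ Hs).Nonempty := by
    intro γ
    constructor
    · rintro ⟨⟨i, y, hyK, hyH⟩, x, hx⟩
      rcases γ.eq_empty_or_nonempty with rfl | ⟨j, hj⟩
      · refine ⟨y, ⟨?_, by simp⟩, hyH⟩
        rw [hCU]; exact Set.mem_iUnion.mpr ⟨i, hyK⟩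
      · refine ⟨x, ⟨?_, Set.mem_biInter fun i hi => (hx i hi).1⟩, (hx j hj).2⟩
        rw [hCU]; exact Set.mem_iUnion.mpr ⟨j, (hx j hj).1⟩
    · rintro ⟨x, ⟨hxC, hxI⟩, hxH⟩
      have hx' : x ∈ ⋃ i, K i := hCU ▸ hxC
      obtain ⟨i, hi⟩ := Set.mem_iUnion.mp hx'
      exact ⟨⟨i, x, hi, hxH⟩, x, fun j hj => ⟨Set.mem_iInter₂.mp hxI j hj, hxH⟩⟩
  have hΓΔ : Γ' ⊆ Δ' := by
    intro γ hγ
    rw [hmemΔ]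
    exact ((hmemΓ γ).mp hγ).mono Set.inter_subset_left
  have hΓdown : ∀ {γ δ : Finset (Fin n)}, γ ⊆ δ → δ ∈ Γ' → γ ∈ Γ' :=
    fun h hδ => nerve_down hδ h
  -- the bottom-point map
  have hbot : ∀ γ : Finset (Fin n), ∃ x, (Kσ γ).Nonempty → IsBot f (Kσ γ) x := by
    intro γ
    by_cases h : (Kσ γ).Nonempty
    · obtain ⟨x, hx⟩ := bot_exists f (hKσc γ) h
      exact ⟨x, fun _ => hx⟩
    · exact ⟨hCne.choose, fun h' => absurd h' h⟩
  choose P hP using hbot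
  have hPb : ∀ γ, γ ∈ Δ' → IsBot f (Kσ γ) (P γ) := fun γ hγ => hP γ ((hmemΔ γ).mp hγ)
  -- the local-fullness vertex map
  have : Nonempty (Fin n) := by
    obtain ⟨y, hy⟩ := hCne
    rw [hCU] at hy
    obtain ⟨i, -⟩ := Set.mem_iUnion.mp hy
    exact ⟨i⟩
  have hvm : ∀ p : Euc d, ∃ v : Fin n, p ∈ C → C ∩ ball p r' ⊆ K v := by
    intro p
    by_cases h : p ∈ C
    · obtain ⟨v, hv⟩ := hfull p h
      exact ⟨v, fun _ => hv⟩
    · exact ⟨Classical.arbitrary _, fun h' => absurd h' h⟩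
  choose vm hvm using hvm
  set Tm : Finset (Fin n) → Finset (Fin n) :=
    fun γ => if vm (P γ) ∈ γ then γ.erase (vm (P γ)) else insert (vm (P γ)) γ with hTmdef
  -- core bundle about Tm
  have hTfacts : ∀ γ, γ ∈ Δ' → γ ∉ Γ' →
      (Tm γ ∈ Δ' ∧ Tm γ ∉ Γ' ∧ P (Tm γ) = P γ ∧ Tm γ ≠ γ) := by
    intro γ hγΔ hγΓ
    set p := P γ with hpdef
    set v := vm p with hvdef
    have hbotγ : IsBot f (Kσ γ) p := hPb γ hγΔ
    have h1 : p ∈ Kσ γ := hbotγ.1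
    have h2 : p ∈ C := hKσC γ h1
    have h3 : p ∈ K v := hvm p h2 ⟨h2, mem_ball_self hr'⟩
    have h4 : Kσ γ ∩ Hs = ∅ := by
      by_contra h
      exact hγΓ ((hmemΓ γ).mpr (Set.nonempty_iff_ne_empty.mpr h))
    have h5 : c ≤ f p := by
      by_contra h
      push_neg at h
      exact absurd (Set.mem_inter h1 (by exact h : p ∈ Hs)) (h4 ▸ Set.notMem_empty p)
    have hTbot : IsBot f (Kσ (Tm γ)) p := by
      by_cases hv : v ∈ γ
      · have hTeq : Tm γ = γ.erase v := by rw [hTmdef]; simp [← hvdef, ← hpdef, hv]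
        rw [hTeq]
        refine ⟨hKσmono (Finset.erase_subset v γ) h1, ?_⟩
        intro y hy hlt
        obtain ⟨z, hzS, hzd, hzlt⟩ := bot_tail f (hKσv (γ.erase v)) hy
          (hKσmono (Finset.erase_subset v γ) h1) hlt hr'
        have hzC : z ∈ C := hKσC _ hzS
        have hzK : z ∈ K v := hvm p h2 ⟨hzC, mem_ball.mpr hzd⟩
        have hzγ : z ∈ Kσ γ := (hKσerase γ v hv) ▸ Set.mem_inter hzS hzK
        exact hbotγ.2 z hzγ hzlt
      · have hTeq : Tm γ = insert v γ := by rw [hTmdef]; simp [← hvdef, ← hpdef, hv]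
        rw [hTeq, hKσins]
        exact ⟨Set.mem_inter h1 h3, fun y hy hlt => hbotγ.2 y hy.1 hlt⟩
    have hTΔ : Tm γ ∈ Δ' := (hmemΔ _).mpr ⟨p, hTbot.1⟩
    have hTΓ : Tm γ ∉ Γ' := by
      intro hmem
      obtain ⟨x, hxK, hxH⟩ := (hmemΓ _).mp hmem
      exact hTbot.2 x hxK (Or.inl (lt_of_lt_of_le hxH h5))
    have hTP : P (Tm γ) = p := bot_unique f (hKσv (Tm γ)) (hPb _ hTΔ) hTbot
    have hTne : Tm γ ≠ γ := by
      by_cases hv : v ∈ γ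
      · have hTeq : Tm γ = γ.erase v := by rw [hTmdef]; simp [← hvdef, ← hpdef, hv]
        rw [hTeq]
        intro h
        exact (Finset.notMem_erase v γ) (h.symm ▸ hv)
      · have hTeq : Tm γ = insert v γ := by rw [hTmdef]; simp [← hvdef, ← hpdef, hv]
        rw [hTeq]
        intro h
        exact hv (h ▸ Finset.mem_insert_self v γ)
    exact ⟨hTΔ, hTΓ, hTP, hTne⟩
  have hTT : ∀ γ, γ ∈ Δ' → γ ∉ Γ' → Tm (Tm γ) = γ := by
    intro γ hγΔ hγΓ
    obtain ⟨-, -, hTP, -⟩ := hTfacts γ hγΔ hγΓ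
    by_cases hv : vm (P γ) ∈ γ
    · have hTeq : Tm γ = γ.erase (vm (P γ)) := by rw [hTmdef]; simp [hv]
      have h2 : vm (P (Tm γ)) ∉ Tm γ := by rw [hTP, hTeq]; exact Finset.notMem_erase _ _
      have h3 : Tm (Tm γ) = insert (vm (P (Tm γ))) (Tm γ) := by
        rw [hTmdef]; exact if_neg h2
      rw [h3, hTP, hTeq, Finset.insert_erase hv]
    · have hTeq : Tm γ = insert (vm (P γ)) γ := by rw [hTmdef]; simp [hv]
      have h2 : vm (P (Tm γ)) ∈ Tm γ := by rw [hTP, hTeq]; exact Finset.mem_insert_self _ _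
      have h3 : Tm (Tm γ) = (Tm γ).erase (vm (P (Tm γ))) := by
        rw [hTmdef]; exact if_pos h2
      rw [h3, hTP, hTeq, Finset.erase_insert hv]
  -- comparable bottom points coincide
  have hPeq : ∀ γ δ : Finset (Fin n), γ ∈ Δ' → δ ∈ Δ' → γ ⊆ δ →
      f (P δ) ≤ f (P γ) → (f (P δ) = f (P γ) → psi (P δ) ≤ psi (P γ)) → P δ = P γ := by
    intro γ δ hγΔ hδΔ hsub hf hψ
    have hmem : P δ ∈ Kσ γ := hKσmono hsub (hPb δ hδΔ).1
    have hnlt : ¬ lexLT f (P δ) (P γ) := (hPb γ hγΔ).2 _ hmem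
    have hfe : f (P δ) = f (P γ) := by
      rcases lt_or_eq_of_le hf with h | h
      · exact absurd (Or.inl h) hnlt
      · exact h
    have hψe : psi (P δ) = psi (P γ) := by
      rcases lt_or_eq_of_le (hψ hfe) with h | h
      · exact absurd (Or.inr ⟨hfe, h⟩) hnlt
      · exact h
    have hbotδ : IsBot f (Kσ γ) (P δ) := by
      refine ⟨hmem, fun y hy hlt => (hPb γ hγΔ).2 y hy ?_⟩
      rcases hlt with h | ⟨h1, h2⟩
      · exact Or.inl (h.trans_eq hfe)
      · exact Or.inr ⟨h1.trans hfe, h2.trans_eq hψe⟩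
    exact bot_unique f (hKσv γ) hbotδ (hPb γ hγΔ)
  -- main induction
  have main : ∀ (N : ℕ) (R : Finset (Finset (Fin n))), R.card ≤ N →
      (∀ γ ∈ R, γ ∈ Δ' ∧ γ ∉ Γ') → (∀ γ ∈ R, Tm γ ∈ R) →
      CollapsesTo (Γ' ∪ ↑R) Γ' := by
    intro N
    induction N with
    | zero =>
      intro R hcard _ _
      have hRe : R = ∅ := Finset.card_eq_zero.mp (Nat.le_zero.mp hcard)
      rw [hRe]
      simp only [Finset.coe_empty, Set.union_empty]
      exact Relation.ReflTransGen.refl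
    | succ N ih =>
      intro R hcard hsub htog
      rcases R.eq_empty_or_nonempty with rfl | hRne
      · simp only [Finset.coe_empty, Set.union_empty]
        exact Relation.ReflTransGen.refl
      obtain ⟨γa, hγa, hmax1⟩ := R.exists_max_image (fun γ => f (P γ)) hRne
      have hR1ne : (R.filter (fun γ => f (P γ) = f (P γa))).Nonempty :=
        ⟨γa, Finset.mem_filter.mpr ⟨hγa, rfl⟩⟩
      obtain ⟨γ₁, hγ₁R1, hmax2⟩ :=
        (R.filter (fun γ => f (P γ) = f (P γa))).exists_max_image (fun γ => psi (P γ)) hR1ne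
      have hγ₁R : γ₁ ∈ R := (Finset.mem_filter.mp hγ₁R1).1
      have hγ₁f : f (P γ₁) = f (P γa) := (Finset.mem_filter.mp hγ₁R1).2
      have hmaxf : ∀ ρ ∈ R, f (P ρ) ≤ f (P γ₁) := fun ρ h => (hmax1 ρ h).trans_eq hγ₁f.symm
      have hmaxψ : ∀ ρ ∈ R, f (P ρ) = f (P γ₁) → psi (P ρ) ≤ psi (P γ₁) := by
        intro ρ h he
        exact hmax2 ρ (Finset.mem_filter.mpr ⟨h, he.trans hγ₁f⟩)
      set p := P γ₁ with hpd
      set v := vm p with hvd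
      set A := R.filter (fun γ => P γ = p) with hAd
      set Avf := A.filter (fun γ => v ∉ γ) with hAvfd
      have hAvfne : Avf.Nonempty := by
        by_cases hv : v ∈ γ₁
        · obtain ⟨hTΔ, hTΓ, hTP, -⟩ := hTfacts γ₁ (hsub γ₁ hγ₁R).1 (hsub γ₁ hγ₁R).2
          refine ⟨Tm γ₁, Finset.mem_filter.mpr
            ⟨Finset.mem_filter.mpr ⟨htog γ₁ hγ₁R, hTP.trans hpd.symm⟩, ?_⟩⟩
          have hTeq : Tm γ₁ = γ₁.erase v := by rw [hTmdef]; simp [← hpd, ← hvd, hv]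
          rw [hTeq]; exact Finset.notMem_erase _ _
        · exact ⟨γ₁, Finset.mem_filter.mpr ⟨Finset.mem_filter.mpr ⟨hγ₁R, hpd.symm⟩, hv⟩⟩
      obtain ⟨γs, hγsAvf, hmaxcard⟩ := Avf.exists_max_image (fun γ => γ.card) hAvfne
      have hγsA : γs ∈ A := (Finset.mem_filter.mp hγsAvf).1
      have hγsv : v ∉ γs := (Finset.mem_filter.mp hγsAvf).2
      have hγsR : γs ∈ R := (Finset.mem_filter.mp hγsA).1
      have hγsP : P γs = p := (Finset.mem_filter.mp hγsA).2
      have hγsΔ : γs ∈ Δ' := (hsub γs hγsR).1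
      have hγsΓ : γs ∉ Γ' := (hsub γs hγsR).2
      obtain ⟨hTΔs, hTΓs, hTPs, hTnes⟩ := hTfacts γs hγsΔ hγsΓ
      have hβeq : Tm γs = insert v γs := by
        rw [hTmdef]; simp [hγsP, ← hvd, hγsv]
      set β := insert v γs with hβd
      have hβR : β ∈ R := by rw [← hβeq]; exact htog γs hγsR
      have hβP : P β = p := by rw [← hβeq, hTPs, hγsP]
      have hvβ : v ∈ β := Finset.mem_insert_self v γs
      have hsubβ : γs ⊆ β := Finset.subset_insert v γs
      have hneβ : γs ≠ β := fun h => hγsv (h ▸ hvβ)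
      have star : ∀ δ : Finset (Fin n), δ ∈ Γ' ∪ (↑R : Set (Finset (Fin n))) → γs ⊆ δ →
          δ = γs ∨ δ = β := by
        intro δ hδ hsubδ
        rcases hδ with hδΓ | hδR
        · exact absurd (hΓdown hsubδ hδΓ) hγsΓ
        · have hδR' : δ ∈ R := hδR
          have hPδ : P δ = p := by
            have h1 : f (P δ) ≤ f (P γs) := by rw [hγsP]; exact hmaxf δ hδR'
            have h2 : f (P δ) = f (P γs) → psi (P δ) ≤ psi (P γs) := by
              rw [hγsP]; exact fun he => hmaxψ δ hδR' he
            exact (hPeq γs δ hγsΔ (hsub δ hδR').1 hsubδ h1 h2).trans hγsP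
          by_cases hvδ : v ∈ δ
          · have hTδ : Tm δ = δ.erase v := by rw [hTmdef]; simp [hPδ, ← hvd, hvδ]
            have hδe : δ.erase v ∈ R := hTδ ▸ htog δ hδR'
            obtain ⟨-, -, hTPδ, -⟩ := hTfacts δ (hsub δ hδR').1 (hsub δ hδR').2
            have hPδe : P (δ.erase v) = p := by rw [← hTδ, hTPδ, hPδ]
            have hin : δ.erase v ∈ Avf := Finset.mem_filter.mpr
              ⟨Finset.mem_filter.mpr ⟨hδe, hPδe⟩, Finset.notMem_erase _ _⟩
            have hsub2 : γs ⊆ δ.erase v := Finset.subset_erase.mpr ⟨hsubδ, hγsv⟩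
            have hcard2 : (δ.erase v).card ≤ γs.card := hmaxcard _ hin
            have hee : δ.erase v = γs := (Finset.eq_of_subset_of_card_le hsub2 hcard2).symm
            right
            rw [hβd, ← hee, Finset.insert_erase hvδ]
          · have hin : δ ∈ Avf := Finset.mem_filter.mpr
              ⟨Finset.mem_filter.mpr ⟨hδR', hPδ⟩, hvδ⟩
            have hcard2 : δ.card ≤ γs.card := hmaxcard _ hin
            left
            exact (Finset.eq_of_subset_of_card_le hsubδ hcard2).symm
      have hγsmem : γs ∈ Γ' ∪ (↑R : Set (Finset (Fin n))) := Or.inr hγsR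
      have hβmem : β ∈ Γ' ∪ (↑R : Set (Finset (Fin n))) := Or.inr (Finset.mem_coe.mpr hβR)
      have hfacetβ : IsFacet (Γ' ∪ ↑R) β := by
        refine ⟨hβmem, fun τ hτ hsubτ => ?_⟩
        rcases star τ hτ (hsubβ.trans hsubτ) with h | h
        · exact absurd (h ▸ hsubτ hvβ) hγsv
        · exact h
      have hfree : IsFreeFace (Γ' ∪ ↑R) γs := by
        refine ⟨hγsmem, ?_, β, ⟨hfacetβ, hsubβ⟩, ?_⟩
        · rintro ⟨-, hmax⟩
          exact hneβ (hmax β hβmem hsubβ).symm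
        · rintro τ ⟨hτfac, hτsub⟩
          rcases star τ hτfac.1 hτsub with h | h
          · exfalso
            have hβτ : β = τ := hτfac.2 β hβmem (by rw [h]; exact hsubβ)
            exact hneβ (hβτ.trans h).symm
          · exact h
      set R' := (R.erase γs).erase β with hR'd
      have hstep : ElemCollapse (Γ' ∪ ↑R) (Γ' ∪ ↑R') := by
        refine ⟨γs, hfree, ?_⟩
        ext τ
        constructor
        · intro hτ
          rcases hτ with hΓ | hR'
          · exact ⟨Or.inl hΓ, fun hsubτ => hγsΓ (hΓdown hsubτ hΓ)⟩
          · have hτ' : τ ∈ R' := Finset.mem_coe.mp hR'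
            rw [hR'd] at hτ'
            have h1 : τ ≠ β := (Finset.mem_erase.mp hτ').1
            have hτ'' := Finset.mem_of_mem_erase hτ'
            have h2 : τ ≠ γs := (Finset.mem_erase.mp hτ'').1
            have hτR : τ ∈ R := Finset.mem_of_mem_erase hτ''
            refine ⟨Or.inr hτR, fun hsubτ => ?_⟩
            rcases star τ (Or.inr hτR) hsubτ with hh | hh
            · exact h2 hh
            · exact h1 hh
        · rintro ⟨hτmem, hnsub⟩
          rcases hτmem with h | h
          · exact Or.inl h
          · have hτR : τ ∈ R := h
            have h1 : τ ≠ β := by rintro rfl; exact hnsub hsubβ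
            have h2 : τ ≠ γs := by rintro rfl; exact hnsub (Finset.Subset.refl _)
            refine Or.inr (Finset.mem_coe.mpr ?_)
            rw [hR'd]
            exact Finset.mem_erase.mpr ⟨h1, Finset.mem_erase.mpr ⟨h2, hτR⟩⟩
      have hβmem2 : β ∈ R.erase γs := Finset.mem_erase.mpr ⟨Ne.symm hneβ, hβR⟩
      have hcard' : R'.card ≤ N := by
        rw [hR'd, Finset.card_erase_of_mem hβmem2, Finset.card_erase_of_mem hγsR]
        omega
      have hsub' : ∀ γ ∈ R', γ ∈ Δ' ∧ γ ∉ Γ' := by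
        intro γ hγ
        rw [hR'd] at hγ
        exact hsub γ (Finset.mem_of_mem_erase (Finset.mem_of_mem_erase hγ))
      have htog' : ∀ γ ∈ R', Tm γ ∈ R' := by
        intro γ hγ
        rw [hR'd] at hγ
        have hγne1 : γ ≠ β := (Finset.mem_erase.mp hγ).1
        have hγ' := Finset.mem_of_mem_erase hγ
        have hγne2 : γ ≠ γs := (Finset.mem_erase.mp hγ').1
        have hγR : γ ∈ R := Finset.mem_of_mem_erase hγ'
        have h2 : Tm (Tm γ) = γ := hTT γ (hsub γ hγR).1 (hsub γ hγR).2
        rw [hR'd]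
        refine Finset.mem_erase.mpr ⟨?_, Finset.mem_erase.mpr ⟨?_, htog γ hγR⟩⟩
        · intro h
          have hTβ : Tm β = γs := by
            have hq : Tm β = β.erase (vm (P β)) := by rw [hTmdef]; exact if_pos (by rw [hβP, ← hvd]; exact hvβ)
            rw [hq, hβP, ← hvd, hβd, Finset.erase_insert hγsv]
          rw [h] at h2
          exact hγne2 (h2.symm.trans hTβ)
        · intro h
          rw [h] at h2
          exact hγne1 (h2.symm.trans hβeq)
      exact Relation.ReflTransGen.head hstep (ih R' hcard' hsub' htog')
  -- conclude
  have hfin : (Δ' \ Γ' : Set (Finset (Fin n))).Finite := Set.toFinite _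
  have hR₀ : (↑hfin.toFinset : Set (Finset (Fin n))) = Δ' \ Γ' := hfin.coe_toFinset
  have hsub₀ : ∀ γ ∈ hfin.toFinset, γ ∈ Δ' ∧ γ ∉ Γ' := by
    intro γ hγ
    have h1 : γ ∈ (↑hfin.toFinset : Set (Finset (Fin n))) := hγ
    rw [hR₀] at h1
    exact ⟨h1.1, h1.2⟩
  have htog₀ : ∀ γ ∈ hfin.toFinset, Tm γ ∈ hfin.toFinset := by
    intro γ hγ
    obtain ⟨h1, h2⟩ := hsub₀ γ hγ
    obtain ⟨h3, h4, -, -⟩ := hTfacts γ h1 h2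
    have h5 : Tm γ ∈ (↑hfin.toFinset : Set (Finset (Fin n))) := by
      rw [hR₀]; exact ⟨h3, h4⟩
    exact h5
  have hunion : Γ' ∪ (↑hfin.toFinset : Set (Finset (Fin n))) = Δ' := by
    rw [hR₀, Set.union_diff_cancel hΓΔ]
  have hfinal := main hfin.toFinset.card hfin.toFinset le_rfl hsub₀ htog₀
  rw [hunion] at hfinal
  exact hfinal

end CURAux

namespace CURAux

open Metric Finset

theorem compactify {n d : ℕ} (U : Fin n → Set (Euc d))
    (hconv : ∀ i, Convex ℝ (U i)) (hopen : ∀ i, IsOpen (U i))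
    (hBconv : Convex ℝ (⋃ i, U i)) (f : Euc d →ₗ[ℝ] ℝ) (c : ℝ)
    (hne : ∃ i, (U i).Nonempty) :
    ∃ (K : Fin n → Set (Euc d)) (C : Set (Euc d)) (r' : ℝ),
      (∀ i, IsCompact (K i)) ∧ (∀ i, Convex ℝ (K i)) ∧ C = ⋃ i, K i ∧ Convex ℝ C ∧
      0 < r' ∧ (∀ p ∈ C, ∃ v, C ∩ Metric.ball p r' ⊆ K v) ∧
      nerveOf K = nerveOf U ∧
      (nerveOf fun i => K i ∩ {x | f x < c}) = (nerveOf fun i => U i ∩ {x | f x < c}) := by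
  classical
  set B : Set (Euc d) := ⋃ i, U i with hBd
  set Hs : Set (Euc d) := {x | f x < c} with hHsd
  set Δu := nerveOf U with hΔud
  set Γu := nerveOf (fun i => U i ∩ Hs) with hΓud
  have hwD : ∀ σ : Finset (Fin n), ∃ x : Euc d, σ ∈ Δu → ((∀ i ∈ σ, x ∈ U i) ∧ x ∈ B) := by
    intro σ
    by_cases hσ : σ ∈ Δu
    · obtain ⟨⟨i0, hi0⟩, x, hx⟩ := hσ
      rcases σ.eq_empty_or_nonempty with rfl | ⟨j, hj⟩
      · exact ⟨hi0.choose, fun _ => ⟨by simp, Set.mem_iUnion.mpr ⟨i0, hi0.choose_spec⟩⟩⟩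
      · exact ⟨x, fun _ => ⟨hx, Set.mem_iUnion.mpr ⟨j, hx j hj⟩⟩⟩
    · exact ⟨0, fun h => absurd h hσ⟩
  choose wD hwD using hwD
  have hwG : ∀ σ : Finset (Fin n), ∃ x : Euc d, σ ∈ Γu →
      ((∀ i ∈ σ, x ∈ U i) ∧ x ∈ Hs ∧ x ∈ B) := by
    intro σ
    by_cases hσ : σ ∈ Γu
    · obtain ⟨⟨i0, y, hy1, hy2⟩, x, hx⟩ := hσ
      rcases σ.eq_empty_or_nonempty with rfl | ⟨j, hj⟩
      · exact ⟨y, fun _ => ⟨by simp, hy2, Set.mem_iUnion.mpr ⟨i0, hy1⟩⟩⟩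
      · exact ⟨x, fun _ => ⟨fun i hi => (hx i hi).1, (hx j hj).2,
          Set.mem_iUnion.mpr ⟨j, (hx j hj).1⟩⟩⟩
    · exact ⟨0, fun h => absurd h hσ⟩
  choose wG hwG using hwG
  set W : Set (Euc d) := (wD '' Δu) ∪ (wG '' Γu) with hWd
  have hWfin : W.Finite := ((Set.toFinite Δu).image wD).union ((Set.toFinite Γu).image wG)
  set C : Set (Euc d) := convexHull ℝ W with hCd
  have hCc : IsCompact C := hWfin.isCompact_convexHull ℝ
  have hCconv : Convex ℝ C := convex_convexHull ℝ W
  have hWB : W ⊆ B := by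
    rintro x (⟨σ, hσ, rfl⟩ | ⟨σ, hσ, rfl⟩)
    · exact (hwD σ hσ).2
    · exact (hwG σ hσ).2.2
  have hCB : C ⊆ ⋃ i, U i := convexHull_min hWB hBconv
  obtain ⟨rL, hrL, hLeb⟩ := lebesgue_number_lemma_of_metric hCc hopen hCB
  have hclD : ∀ σ : Finset (Fin n), ∃ ε : ℝ, 0 < ε ∧
      (σ ∈ Δu → ∀ i ∈ σ, Metric.ball (wD σ) ε ⊆ U i) := by
    intro σ
    by_cases hσ : σ ∈ Δu
    · have hop : IsOpen (⋂ i ∈ σ, U i) := isOpen_biInter_finset fun i _ => hopen i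
      have hmem : wD σ ∈ ⋂ i ∈ σ, U i := Set.mem_biInter fun i hi => (hwD σ hσ).1 i hi
      obtain ⟨ε, hε, hball⟩ := Metric.isOpen_iff.mp hop _ hmem
      exact ⟨ε, hε, fun _ i hi => hball.trans (Set.biInter_subset_of_mem hi)⟩
    · exact ⟨1, one_pos, fun h => absurd h hσ⟩
  choose εD hεD using hclD
  have hclG : ∀ σ : Finset (Fin n), ∃ ε : ℝ, 0 < ε ∧
      (σ ∈ Γu → ∀ i ∈ σ, Metric.ball (wG σ) ε ⊆ U i) := by
    intro σ
    by_cases hσ : σ ∈ Γu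
    · have hop : IsOpen (⋂ i ∈ σ, U i) := isOpen_biInter_finset fun i _ => hopen i
      have hmem : wG σ ∈ ⋂ i ∈ σ, U i := Set.mem_biInter fun i hi => (hwG σ hσ).1 i hi
      obtain ⟨ε, hε, hball⟩ := Metric.isOpen_iff.mp hop _ hmem
      exact ⟨ε, hε, fun _ i hi => hball.trans (Set.biInter_subset_of_mem hi)⟩
    · exact ⟨1, one_pos, fun h => absurd h hσ⟩
  choose εG hεG using hclG
  have hFne : (Finset.univ : Finset (Finset (Fin n))).Nonempty := ⟨∅, Finset.mem_univ _⟩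
  set r : ℝ := min (min (Finset.univ.inf' hFne εD) (Finset.univ.inf' hFne εG)) rL / 2 with hrd
  have hr0 : 0 < r := by
    apply div_pos _ two_pos
    apply lt_min (lt_min ?_ ?_) hrL
    · rw [Finset.lt_inf'_iff]; exact fun σ _ => (hεD σ).1
    · rw [Finset.lt_inf'_iff]; exact fun σ _ => (hεG σ).1
  have hrL' : r < rL := by
    have h := min_le_right (min (Finset.univ.inf' hFne εD) (Finset.univ.inf' hFne εG)) rL
    rw [hrd]; linarith
  have hrD : ∀ σ, r ≤ εD σ := by
    intro σ
    have h1 : Finset.univ.inf' hFne εD ≤ εD σ := Finset.inf'_le _ (Finset.mem_univ σ)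
    have h2 := min_le_left (min (Finset.univ.inf' hFne εD) (Finset.univ.inf' hFne εG)) rL
    have h3 := min_le_left (Finset.univ.inf' hFne εD) (Finset.univ.inf' hFne εG)
    rw [hrd]; linarith [hr0]
  have hrG : ∀ σ, r ≤ εG σ := by
    intro σ
    have h1 : Finset.univ.inf' hFne εG ≤ εG σ := Finset.inf'_le _ (Finset.mem_univ σ)
    have h2 := min_le_left (min (Finset.univ.inf' hFne εD) (Finset.univ.inf' hFne εG)) rL
    have h3 := min_le_right (Finset.univ.inf' hFne εD) (Finset.univ.inf' hFne εG)
    rw [hrd]; linarith [hr0]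
  set K : Fin n → Set (Euc d) := fun i => C ∩ {x | Metric.ball x r ⊆ U i} with hKd
  have hcore : ∀ i, IsClosed {x : Euc d | Metric.ball x r ⊆ U i} := by
    intro i
    rw [← isOpen_compl_iff, Metric.isOpen_iff]
    intro x hx
    simp only [Set.mem_compl_iff, Set.mem_setOf_eq] at hx
    obtain ⟨y, hy1, hy2⟩ := Set.not_subset.mp hx
    have hy1' : dist y x < r := Metric.mem_ball.mp hy1
    refine ⟨r - dist y x, by linarith, ?_⟩
    intro z hz
    have hz' : dist z x < r - dist y x := Metric.mem_ball.mp hz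
    simp only [Set.mem_compl_iff, Set.mem_setOf_eq]
    intro hsub
    apply hy2
    apply hsub
    rw [Metric.mem_ball]
    calc dist y z ≤ dist y x + dist x z := dist_triangle _ _ _
      _ < r := by rw [dist_comm x z]; linarith
  have hKc : ∀ i, IsCompact (K i) := fun i => hCc.inter_right (hcore i)
  have hKconv : ∀ i, Convex ℝ (K i) := by
    intro i x hx y hy a b ha hb hab
    refine ⟨hCconv hx.1 hy.1 ha hb hab, ?_⟩
    intro z hz
    have hz' : dist z (a • x + b • y) < r := Metric.mem_ball.mp hz
    set u := z - (a • x + b • y) with hud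
    have hun : ‖u‖ < r := by rw [hud, ← dist_eq_norm]; exact hz'
    have hxball : x + u ∈ Metric.ball x r := by
      rw [Metric.mem_ball, dist_eq_norm, add_sub_cancel_left]; exact hun
    have hyball : y + u ∈ Metric.ball y r := by
      rw [Metric.mem_ball, dist_eq_norm, add_sub_cancel_left]; exact hun
    have hzid : z = a • (x + u) + b • (y + u) := by
      have h1 : a • (x + u) + b • (y + u) = (a • x + b • y) + (a + b) • u := by module
      rw [h1, hab, one_smul, hud]; abel
    rw [hzid]
    exact hconv i (hx.2 hxball) (hy.2 hyball) ha hb hab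
  have hUC : (⋃ i, K i) = C := by
    apply Set.Subset.antisymm
    · exact Set.iUnion_subset fun i => Set.inter_subset_left
    · intro x hx
      obtain ⟨i, hball⟩ := hLeb x hx
      exact Set.mem_iUnion.mpr ⟨i, hx, fun z hz =>
        hball (Metric.ball_subset_ball hrL'.le hz)⟩
  have hfull : ∀ p ∈ C, ∃ v, C ∩ Metric.ball p (rL - r) ⊆ K v := by
    intro p hp
    obtain ⟨v, hball⟩ := hLeb p hp
    refine ⟨v, ?_⟩
    rintro y ⟨hyC, hyball⟩
    refine ⟨hyC, ?_⟩
    intro z hz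
    apply hball
    rw [Metric.mem_ball] at *
    calc dist z p ≤ dist z y + dist y p := dist_triangle _ _ _
      _ < r + (rL - r) := add_lt_add hz hyball
      _ = rL := by ring
  have hKU : ∀ i, K i ⊆ U i := fun i x hx => hx.2 (Metric.mem_ball_self hr0)
  have hnK : nerveOf K = nerveOf U := by
    apply Set.Subset.antisymm
    · exact nerve_mono hKU
    · intro σ hσ
      have hσ' : σ ∈ Δu := hσ
      have hwmem : wD σ ∈ C := subset_convexHull ℝ W (Or.inl ⟨σ, hσ', rfl⟩)
      refine ⟨?_, wD σ, ?_⟩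
      · have hx : wD σ ∈ ⋃ i, K i := hUC.symm ▸ hwmem
        obtain ⟨i, hi⟩ := Set.mem_iUnion.mp hx
        exact ⟨i, wD σ, hi⟩
      · intro i hi
        refine ⟨hwmem, ?_⟩
        intro z hz
        exact (hεD σ).2 hσ' i hi (Metric.ball_subset_ball (hrD σ) hz)
  have hnKH : (nerveOf fun i => K i ∩ Hs) = nerveOf fun i => U i ∩ Hs := by
    apply Set.Subset.antisymm
    · exact nerve_mono fun i => Set.inter_subset_inter (hKU i) Set.Subset.rfl
    · intro σ hσ
      have hσ' : σ ∈ Γu := hσ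
      have hwmem : wG σ ∈ C := subset_convexHull ℝ W (Or.inr ⟨σ, hσ', rfl⟩)
      refine ⟨?_, wG σ, ?_⟩
      · have hx : wG σ ∈ ⋃ i, K i := hUC.symm ▸ hwmem
        obtain ⟨i, hi⟩ := Set.mem_iUnion.mp hx
        exact ⟨i, wG σ, hi, (hwG σ hσ').2.1⟩
      · intro i hi
        refine ⟨⟨hwmem, ?_⟩, (hwG σ hσ').2.1⟩
        intro z hz
        exact (hεG σ).2 hσ' i hi (Metric.ball_subset_ball (hrG σ) hz)
  exact ⟨K, C, rL - r, hKc, hKconv, hUC.symm, hCconv, by linarith, hfull, hnK, hnKH⟩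

theorem nerve_closed_eq_open {n d : ℕ} (U : Fin n → Set (Euc d)) (hopen : ∀ i, IsOpen (U i))
    (f : Euc d →ₗ[ℝ] ℝ) (hf0 : f ≠ 0) (c : ℝ) :
    (nerveOf fun i => U i ∩ {x | f x ≤ c}) = nerveOf fun i => U i ∩ {x | f x < c} := by
  classical
  have hw : ∃ w : Euc d, f w = 1 := by
    obtain ⟨u, hu⟩ : ∃ u, f u ≠ 0 := by
      by_contra h
      push_neg at h
      exact hf0 (LinearMap.ext fun x => by rw [h x]; rfl)
    exact ⟨(f u)⁻¹ • u, by rw [map_smul, smul_eq_mul, inv_mul_cancel₀ hu]⟩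
  obtain ⟨w, hw1⟩ := hw
  have key : ∀ (S : Set (Euc d)), IsOpen S → ∀ x ∈ S, f x ≤ c → ∃ y ∈ S, f y < c := by
    intro S hS x hx hfx
    rcases lt_or_eq_of_le hfx with h | h
    · exact ⟨x, hx, h⟩
    obtain ⟨ε, hε, hball⟩ := Metric.isOpen_iff.mp hS x hx
    have hwpos : (0:ℝ) < ‖w‖ + 1 := by positivity
    set t : ℝ := ε / (2 * (‖w‖ + 1)) with htd
    have ht : 0 < t := by positivity
    refine ⟨x - t • w, hball ?_, ?_⟩
    · rw [Metric.mem_ball, dist_eq_norm, sub_sub_cancel_left, norm_neg, norm_smul,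
        Real.norm_eq_abs, abs_of_pos ht]
      have h1 : t * ‖w‖ ≤ t * (‖w‖ + 1) := by nlinarith [norm_nonneg w]
      have h2 : t * (‖w‖ + 1) = ε / 2 := by rw [htd]; field_simp
      linarith
    · have : f (x - t • w) = f x - t := by
        rw [map_sub, map_smul, smul_eq_mul, hw1, mul_one]
      rw [this, h]
      linarith
  apply Set.Subset.antisymm
  · rintro σ ⟨⟨i, y, hyU, hyH⟩, x, hx⟩
    constructor
    · obtain ⟨y', hy', hy'f⟩ := key (U i) (hopen i) y hyU hyH
      exact ⟨i, y', hy', hy'f⟩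
    · rcases σ.eq_empty_or_nonempty with rfl | ⟨j, hj⟩
      · exact ⟨0, by simp⟩
      · have hxS : x ∈ ⋂ i ∈ σ, U i := Set.mem_biInter fun i hi => (hx i hi).1
        have hxf : f x ≤ c := (hx j hj).2
        obtain ⟨y', hy', hy'f⟩ := key _ (isOpen_biInter_finset fun i _ => hopen i) x hxS hxf
        exact ⟨y', fun i hi => ⟨Set.mem_iInter₂.mp hy' i hi, hy'f⟩⟩
  · apply nerve_mono
    intro i
    apply Set.inter_subset_inter Set.Subset.rfl
    intro x hx
    simp only [Set.mem_setOf_eq] at hx ⊢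
    exact le_of_lt hx

end CURAux


/-- **Theorem (halfspace collapse).** If `{U i}` is a `d`-convex union
representation of `Δ` and `H ⊆ ℝ^d` is a closed or open halfspace, then `Δ`
collapses onto the nerve of `{U i ∩ H}`. -/
theorem collapsesTo_nerve_inter_halfspace {n d : ℕ} (Δ : Set (Finset (Fin n)))
    (U : Fin n → Set (Euc d)) (hU : IsCURep U Δ)
    (H : Set (Euc d)) (hH : IsHalfspace H) :
    CollapsesTo Δ (nerveOf fun i => U i ∩ H) := by
  classical
  obtain ⟨hconv, hopen, hBconv, hnerve⟩ := hU
  obtain ⟨f, c, hf0, hHeq⟩ := hH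
  subst hnerve
  by_cases hne : ∃ i, (U i).Nonempty
  · have key : CollapsesTo (nerveOf U) (nerveOf fun i => U i ∩ {x | f x < c}) := by
      obtain ⟨K, C, r', hKc, hKv, hCU, hCconv, hr', hfull, hnK, hnKH⟩ :=
        CURAux.compactify U hconv hopen hBconv f c hne
      have h := CURAux.engine K hKc hKv hCU hCconv hr' hfull f c
      rwa [hnK, hnKH] at h
    rcases hHeq with rfl | rfl
    · exact key
    · rw [CURAux.nerve_closed_eq_open U hopen f hf0 c]
      exact key
  · push_neg at hne
    have h1 : nerveOf U = ∅ := by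
      ext σ
      simp only [nerveOf, Set.mem_setOf_eq, Set.mem_empty_iff_false, iff_false]
      rintro ⟨⟨i, hi⟩, -⟩
      rw [hne i] at hi
      exact Set.not_nonempty_empty hi
    have h2 : (nerveOf fun i => U i ∩ H) = ∅ := by
      ext σ
      simp only [nerveOf, Set.mem_setOf_eq, Set.mem_empty_iff_false, iff_false]
      rintro ⟨⟨i, hi⟩, -⟩
      rw [hne i] at hi
      exact Set.not_nonempty_empty (hi.mono (Set.empty_inter H).subset)
    rw [h1, h2]
    exact Relation.ReflTransGen.refl
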